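/- Assume model (1.1) and that all K₂ column clusters have equal size q/K₂ (so K₂ divides q and Bᵀ B = (q/K₂) I_{K₂}). Then Σ_{p,W_I} = (1/K₂) A E(Z Zᵀ) Aᵀ + (1/q) E(Γ Γᵀ) and Σ_{p,W_O} = (1/K₂) A E(Z Zᵀ) Aᵀ + (K₂/q) · { (1/q) E(Γ Γᵀ) }; that is, the two weighted covariance matrices have the same signal term while the noise term in Σ_{p,W_O} is reduced by the factor K₂/q relative to Σ_{p,W_I}. -/

import Mathlib

open MeasureTheory ProbabilityTheory Matrix BigOperators Finset
open scoped Classical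

noncomputable section

instance {m n : Type*} : MeasurableSpace (Matrix m n ℝ) :=
  inferInstanceAs (MeasurableSpace (m → n → ℝ))

/-- Entrywise expectation of a random matrix. -/
def matExp {Ω : Type*} [MeasurableSpace Ω] (μ : Measure Ω) {m n : ℕ}
    (X : Ω → Matrix (Fin m) (Fin n) ℝ) : Matrix (Fin m) (Fin n) ℝ :=
  Matrix.of fun i j => ∫ ω, X ω i j ∂μ

/-- A membership matrix: binary, every row has exactly one 1, every column is nonzero. -/
def IsMembership {p K : ℕ} (A : Matrix (Fin p) (Fin K) ℝ) : Prop :=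
  (∀ i k, A i k = 0 ∨ A i k = 1) ∧ (∀ i, ∃! k, A i k = 1) ∧ (∀ k, ∃ i, A i k = 1)

/-- `a` and `b` belong to the same cluster encoded by the membership matrix `A`. -/
def SameCluster {p K : ℕ} (A : Matrix (Fin p) (Fin K) ℝ) (a b : Fin p) : Prop :=
  ∃ k, A a k = 1 ∧ A b k = 1

/-- Under model (1.1) with all `K₂` column clusters of equal size
`q/K₂`, the weighted covariance matrices with `W_I = I_q/q` and
`W_O = B(BᵀB)^{-2}Bᵀ/K₂` share the same signal term `(1/K₂) A E(ZZᵀ) Aᵀ`,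
while the noise term of `Σ_{p,W_O}` is `(K₂/q)` times that of `Σ_{p,W_I}`. -/
theorem optimal_weight_noise_reduction
    {Ω : Type} [MeasurableSpace Ω] (μ : Measure Ω) [IsProbabilityMeasure μ]
    {p q K₁ K₂ : ℕ} (hq : 0 < q) (hK₂ : 0 < K₂) (hdvd : K₂ ∣ q)
    (A : Matrix (Fin p) (Fin K₁) ℝ) (B : Matrix (Fin q) (Fin K₂) ℝ)
    (Z : Ω → Matrix (Fin K₁) (Fin K₂) ℝ) (Γ X : Ω → Matrix (Fin p) (Fin q) ℝ)
    (hA : IsMembership A) (hB : IsMembership B)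
    (hsize : ∀ t : Fin K₂, (Finset.univ.filter fun j => B j t = 1).card = q / K₂)
    (hmodel : ∀ ω, X ω = A * Z ω * Bᵀ + Γ ω)
    (hZmeas : Measurable Z) (hΓmeas : Measurable Γ)
    (hZmean : ∀ j k, ∫ ω, Z ω j k ∂μ = 0)
    (hΓmean : ∀ a b, ∫ ω, Γ ω a b ∂μ = 0)
    (hZint : ∀ j k j' k', Integrable (fun ω => Z ω j k * Z ω j' k') μ)
    (hΓint : ∀ a b a' b', Integrable (fun ω => Γ ω a b * Γ ω a' b') μ)
    (hZΓint : ∀ j k a b, Integrable (fun ω => Z ω j k * Γ ω a b) μ)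
    (hΓindep : iIndepFun
      (fun (ij : Fin p × Fin q) ω => Γ ω ij.1 ij.2) μ)
    (hindep : IndepFun Z Γ μ) :
    matExp μ (fun ω => X ω * ((1/(q:ℝ)) • (1 : Matrix (Fin q) (Fin q) ℝ)) * (X ω)ᵀ)
      = (1/(K₂:ℝ)) • (A * matExp μ (fun ω => Z ω * (Z ω)ᵀ) * Aᵀ)
        + (1/(q:ℝ)) • matExp μ (fun ω => Γ ω * (Γ ω)ᵀ) ∧
    matExp μ (fun ω =>
        X ω * ((1/(K₂:ℝ)) • (B * ((Bᵀ * B)^2)⁻¹ * Bᵀ)) * (X ω)ᵀ)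
      = (1/(K₂:ℝ)) • (A * matExp μ (fun ω => Z ω * (Z ω)ᵀ) * Aᵀ)
        + ((K₂:ℝ)/(q:ℝ)) • ((1/(q:ℝ)) • matExp μ (fun ω => Γ ω * (Γ ω)ᵀ)) := by
  classical
  obtain ⟨hA01, hArow, -⟩ := hA
  obtain ⟨hB01, hBrow, -⟩ := hB
  choose σ hσ hσu using hArow
  choose τ hτ hτu using hBrow
  have hAval : ∀ i k, A i k = if k = σ i then 1 else 0 := by
    intro i k
    by_cases h : k = σ i
    · subst h; simp [hσ i]
    · rcases hA01 i k with h0 | h1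
      · simp [h, h0]
      · exact absurd (hσu i k h1) h
  have hBval : ∀ j t, B j t = if t = τ j then 1 else 0 := by
    intro j t
    by_cases h : t = τ j
    · subst h; simp [hτ j]
    · rcases hB01 j t with h0 | h1
      · simp [h, h0]
      · exact absurd (hτu j t h1) h
  have hcard : ∀ t : Fin K₂, (Finset.univ.filter fun b => τ b = t).card = q / K₂ := by
    intro t
    rw [← hsize t]
    congr 1
    ext b
    simp only [mem_filter, mem_univ, true_and]
    constructor
    · intro h; rw [← h]; exact hτ b
    · intro h; exact (hτu b t h).symm
  set c : ℝ := ((q / K₂ : ℕ) : ℝ) with hc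
  have hcval : c = (q : ℝ) / (K₂ : ℝ) := by
    rw [hc, Nat.cast_div hdvd (by exact_mod_cast hK₂.ne')]
  have hcpos : 0 < c := by
    rw [hc]
    exact_mod_cast Nat.div_pos (Nat.le_of_dvd hq hdvd) hK₂
  have hqne : (q : ℝ) ≠ 0 := by exact_mod_cast hq.ne'
  have hKne : (K₂ : ℝ) ≠ 0 := by exact_mod_cast hK₂.ne'
  have hfiber : ∀ f : Fin K₂ → ℝ, ∑ b : Fin q, f (τ b) = c * ∑ t : Fin K₂, f t := by
    intro f
    rw [← Finset.sum_fiberwise' Finset.univ τ f, Finset.mul_sum]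
    refine Finset.sum_congr rfl fun t _ => ?_
    rw [Finset.sum_const, hcard t, nsmul_eq_mul, hc]
  have hZm : ∀ j k, Measurable fun ω => Z ω j k := fun j k =>
    (measurable_pi_apply k).comp ((measurable_pi_apply j).comp hZmeas)
  have hΓm : ∀ a b, Measurable fun ω => Γ ω a b := fun a b =>
    (measurable_pi_apply b).comp ((measurable_pi_apply a).comp hΓmeas)
  have hZ1 : ∀ j k, Integrable (fun ω => Z ω j k) μ := by
    intro j k
    have h2 : MemLp (fun ω => Z ω j k) 2 μ :=
      (memLp_two_iff_integrable_sq (hZm j k).aestronglyMeasurable).2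
        (by simpa [sq] using hZint j k j k)
    exact h2.integrable (by norm_num)
  have hΓ1 : ∀ a b, Integrable (fun ω => Γ ω a b) μ := by
    intro a b
    have h2 : MemLp (fun ω => Γ ω a b) 2 μ :=
      (memLp_two_iff_integrable_sq (hΓm a b).aestronglyMeasurable).2
        (by simpa [sq] using hΓint a b a b)
    exact h2.integrable (by norm_num)
  have hZΓ0 : ∀ j k a b, ∫ ω, Z ω j k * Γ ω a b ∂μ = 0 := by
    intro j k a b
    have hind : IndepFun (fun ω => Z ω j k) (fun ω => Γ ω a b) μ :=
      hindep.comp ((measurable_pi_apply k).comp (measurable_pi_apply j))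
        ((measurable_pi_apply b).comp (measurable_pi_apply a))
    have h := hind.integral_fun_mul_eq_mul_integral (hZ1 j k).aestronglyMeasurable (hΓ1 a b).aestronglyMeasurable
    rw [hZmean, zero_mul] at h
    exact h
  have hΓΓ0 : ∀ a b a' b', (a, b) ≠ (a', b') → ∫ ω, Γ ω a b * Γ ω a' b' ∂μ = 0 := by
    intro a b a' b' hne
    have hind : IndepFun (fun ω => Γ ω a b) (fun ω => Γ ω a' b') μ :=
      hΓindep.indepFun hne
    have h := hind.integral_fun_mul_eq_mul_integral (hΓ1 a b).aestronglyMeasurable (hΓ1 a' b').aestronglyMeasurable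
    rw [hΓmean, zero_mul] at h
    exact h
  have hXent : ∀ ω a b, X ω a b = Z ω (σ a) (τ b) + Γ ω a b := by
    intro ω a b
    rw [hmodel]
    have h1 : (A * Z ω * Bᵀ) a b = Z ω (σ a) (τ b) := by
      simp [Matrix.mul_apply, Matrix.transpose_apply, hAval, hBval, ite_mul, mul_ite]
    simp [Matrix.add_apply, h1]
  set EZZ : Fin K₁ → Fin K₂ → Fin K₁ → Fin K₂ → ℝ :=
    fun j k j' k' => ∫ ω, Z ω j k * Z ω j' k' ∂μ with hEZZ
  set EGG : Fin p → Fin q → Fin p → Fin q → ℝ :=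
    fun a b a' b' => ∫ ω, Γ ω a b * Γ ω a' b' ∂μ with hEGG
  have hXprod : ∀ a b a' b',
      (fun ω => X ω a b * X ω a' b') =
      (fun ω => Z ω (σ a) (τ b) * Z ω (σ a') (τ b')
        + Z ω (σ a) (τ b) * Γ ω a' b'
        + Z ω (σ a') (τ b') * Γ ω a b
        + Γ ω a b * Γ ω a' b') := by
    intro a b a' b'
    funext ω
    rw [hXent, hXent]
    ring
  have hXint : ∀ a b a' b', Integrable (fun ω => X ω a b * X ω a' b') μ := by
    intro a b a' b'
    rw [hXprod]
    exact (((hZint _ _ _ _).add (hZΓint _ _ _ _)).add (hZΓint _ _ _ _)).add (hΓint _ _ _ _)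
  have hEX : ∀ a b a' b', ∫ ω, X ω a b * X ω a' b' ∂μ
      = EZZ (σ a) (τ b) (σ a') (τ b') + EGG a b a' b' := by
    intro a b a' b'
    have I1 : Integrable (fun ω => Z ω (σ a) (τ b) * Z ω (σ a') (τ b')
        + Z ω (σ a) (τ b) * Γ ω a' b') μ := (hZint _ _ _ _).add (hZΓint _ _ _ _)
    have I2 : Integrable (fun ω => Z ω (σ a) (τ b) * Z ω (σ a') (τ b')
        + Z ω (σ a) (τ b) * Γ ω a' b' + Z ω (σ a') (τ b') * Γ ω a b) μ :=
      I1.add (hZΓint _ _ _ _)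
    rw [hXprod,
      integral_add I2 (hΓint _ _ _ _),
      integral_add I1 (hZΓint _ _ _ _),
      integral_add (hZint _ _ _ _) (hZΓint _ _ _ _),
      hZΓ0, hZΓ0]
    simp [hEZZ, hEGG]
  have key : ∀ (W : Matrix (Fin q) (Fin q) ℝ) (a a' : Fin p),
      ∫ ω, (X ω * W * (X ω)ᵀ) a a' ∂μ
        = ∑ b : Fin q, ∑ b' : Fin q,
            W b b' * (EZZ (σ a) (τ b) (σ a') (τ b') + EGG a b a' b') := by
    intro W a a'
    have hrw : ∀ ω, (X ω * W * (X ω)ᵀ) a a'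
        = ∑ b : Fin q, ∑ b' : Fin q, W b b' * (X ω a b * X ω a' b') := by
      intro ω
      simp only [Matrix.mul_apply, Matrix.transpose_apply, Finset.sum_mul]
      rw [Finset.sum_comm]
      exact Finset.sum_congr rfl fun b _ => Finset.sum_congr rfl fun b' _ => by ring
    simp only [hrw]
    rw [integral_finset_sum _ fun b _ => integrable_finset_sum _
        fun b' _ => (hXint a b a' b').const_mul (W b b')]
    refine Finset.sum_congr rfl fun b _ => ?_
    rw [integral_finset_sum _ fun b' _ => (hXint a b a' b').const_mul (W b b')]
    refine Finset.sum_congr rfl fun b' _ => ?_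
    rw [integral_const_mul, hEX]
  have hMZ : ∀ j j', matExp μ (fun ω => Z ω * (Z ω)ᵀ) j j' = ∑ t : Fin K₂, EZZ j t j' t := by
    intro j j'
    show (∫ ω, (Z ω * (Z ω)ᵀ) j j' ∂μ) = _
    simp only [Matrix.mul_apply, Matrix.transpose_apply]
    rw [integral_finset_sum _ fun t _ => hZint j t j' t]
  have hMG : ∀ a a', matExp μ (fun ω => Γ ω * (Γ ω)ᵀ) a a' = ∑ b : Fin q, EGG a b a' b := by
    intro a a'
    show (∫ ω, (Γ ω * (Γ ω)ᵀ) a a' ∂μ) = _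
    simp only [Matrix.mul_apply, Matrix.transpose_apply]
    rw [integral_finset_sum _ fun b _ => hΓint a b a' b]
  have hsig : ∀ a a', (A * matExp μ (fun ω => Z ω * (Z ω)ᵀ) * Aᵀ) a a'
      = ∑ t : Fin K₂, EZZ (σ a) t (σ a') t := by
    intro a a'
    have h1 : (A * matExp μ (fun ω => Z ω * (Z ω)ᵀ) * Aᵀ) a a'
        = matExp μ (fun ω => Z ω * (Z ω)ᵀ) (σ a) (σ a') := by
      simp [Matrix.mul_apply, Matrix.transpose_apply, hAval, ite_mul, mul_ite]
    rw [h1, hMZ]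
  have hGGdiag : ∀ (a a' : Fin p) (b b' : Fin q), b ≠ b' → EGG a b a' b' = 0 := by
    intro a a' b b' hne
    exact hΓΓ0 a b a' b' (by simp [Prod.ext_iff, hne])
  constructor
  · -- first identity
    ext a a'
    show (∫ ω, (X ω * ((1/(q:ℝ)) • (1 : Matrix (Fin q) (Fin q) ℝ)) * (X ω)ᵀ) a a' ∂μ) = _
    rw [key]
    have inner1 : ∀ b : Fin q,
        ∑ b' : Fin q, ((1/(q:ℝ)) • (1 : Matrix (Fin q) (Fin q) ℝ)) b b'
          * (EZZ (σ a) (τ b) (σ a') (τ b') + EGG a b a' b')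
        = (1/(q:ℝ)) * EZZ (σ a) (τ b) (σ a') (τ b) + (1/(q:ℝ)) * EGG a b a' b := by
      intro b
      rw [Finset.sum_eq_single b]
      · simp [Matrix.smul_apply, Matrix.one_apply, mul_add]
      · intro b' _ hne
        simp [Matrix.smul_apply, Matrix.one_apply, Ne.symm hne]
      · intro h; exact absurd (Finset.mem_univ b) h
    rw [Finset.sum_congr rfl fun b _ => inner1 b, Finset.sum_add_distrib,
      ← Finset.mul_sum, ← Finset.mul_sum, hfiber (fun t => EZZ (σ a) t (σ a') t)]
    show _ = ((1/(K₂:ℝ)) • (A * matExp μ (fun ω => Z ω * (Z ω)ᵀ) * Aᵀ)) a a'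
      + ((1/(q:ℝ)) • matExp μ (fun ω => Γ ω * (Γ ω)ᵀ)) a a'
    rw [Matrix.smul_apply, Matrix.smul_apply, smul_eq_mul, smul_eq_mul, hsig, hMG]
    have hcoef : (1/(q:ℝ)) * c = 1/(K₂:ℝ) := by
      rw [hcval]; field_simp
    rw [← mul_assoc, hcoef]
  · -- second identity
    have hBtB : Bᵀ * B = c • (1 : Matrix (Fin K₂) (Fin K₂) ℝ) := by
      ext s t
      rw [Matrix.mul_apply]
      by_cases h : s = t
      · subst h
        have hterm : ∀ j, Bᵀ s j * B j s = if τ j = s then 1 else 0 := by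
          intro j
          simp only [Matrix.transpose_apply, hBval]
          by_cases hj : s = τ j <;> simp [hj, eq_comm]
        rw [Finset.sum_congr rfl fun j _ => hterm j, Finset.sum_boole]
        simp [Matrix.smul_apply, Matrix.one_apply, hcard, hc]
      · have hterm : ∀ j, Bᵀ s j * B j t = 0 := by
          intro j
          simp only [Matrix.transpose_apply, hBval]
          by_cases hs : s = τ j
          · by_cases ht : t = τ j
            · exact absurd (hs.trans ht.symm) h
            · simp [ht]
          · simp [hs]
        rw [Finset.sum_congr rfl fun j _ => hterm j]
        simp [Matrix.smul_apply, Matrix.one_apply, h]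
    have hinv : ((Bᵀ * B)^2)⁻¹ = (c^2)⁻¹ • (1 : Matrix (Fin K₂) (Fin K₂) ℝ) := by
      rw [hBtB, smul_pow, one_pow]
      apply Matrix.inv_eq_right_inv
      rw [Matrix.smul_mul, Matrix.mul_smul, Matrix.one_mul, smul_smul,
        mul_inv_cancel₀ (pow_ne_zero 2 hcpos.ne'), one_smul]
    set d : ℝ := (1/(K₂:ℝ)) * (c^2)⁻¹ with hd
    have hWmat : (1/(K₂:ℝ)) • (B * ((Bᵀ * B)^2)⁻¹ * Bᵀ) = d • (B * Bᵀ) := by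
      rw [hinv, Matrix.mul_smul, Matrix.mul_one, Matrix.smul_mul, smul_smul, hd]
    have hBBt : ∀ b b' : Fin q, (B * Bᵀ) b b' = if τ b = τ b' then 1 else 0 := by
      intro b b'
      rw [Matrix.mul_apply]
      rw [Finset.sum_eq_single (τ b)]
      · simp only [Matrix.transpose_apply, hBval]
        by_cases h : τ b = τ b' <;> simp [h, eq_comm]
      · intro t _ hne
        simp [Matrix.transpose_apply, hBval, hne]
      · intro h; exact absurd (Finset.mem_univ (τ b)) h
    ext a a'
    show (∫ ω, (X ω * (((1/(K₂:ℝ)) • (B * ((Bᵀ * B)^2)⁻¹ * Bᵀ)) : Matrix (Fin q) (Fin q) ℝ) * (X ω)ᵀ) a a' ∂μ) = _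
    rw [key]
    simp only [hWmat]
    simp only [Matrix.smul_apply, hBBt, smul_eq_mul]
    have inner2 : ∀ b : Fin q,
        ∑ b' : Fin q, d * (if τ b = τ b' then 1 else 0)
          * (EZZ (σ a) (τ b) (σ a') (τ b') + EGG a b a' b')
        = c * (d * EZZ (σ a) (τ b) (σ a') (τ b)) + d * EGG a b a' b := by
      intro b
      have split : ∀ b' : Fin q, d * (if τ b = τ b' then 1 else 0)
          * (EZZ (σ a) (τ b) (σ a') (τ b') + EGG a b a' b')
          = (if τ b' = τ b then d * EZZ (σ a) (τ b) (σ a') (τ b) else 0)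
            + (if b' = b then d * EGG a b a' b' else 0) := by
        intro b'
        by_cases h : τ b = τ b'
        · by_cases hb : b' = b
          · subst hb
            simp [h, mul_add]
          · have hg : EGG a b a' b' = 0 := hGGdiag a a' b b' (Ne.symm hb)
            have hz : EZZ (σ a) (τ b) (σ a') (τ b') = EZZ (σ a) (τ b) (σ a') (τ b) := by
              rw [h]
            rw [hg, hz, if_pos h, if_pos h.symm, if_neg hb]
            ring
        · have hb : b' ≠ b := fun e => h (by rw [e])
          have h' : ¬ τ b' = τ b := fun e => h e.symm
          rw [if_neg h, if_neg h', if_neg hb]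
          ring
      rw [Finset.sum_congr rfl fun b' _ => split b', Finset.sum_add_distrib]
      congr 1
      · rw [← Finset.sum_filter, Finset.sum_const, hcard (τ b), nsmul_eq_mul, hc]
      · rw [Finset.sum_ite_eq' Finset.univ b (fun b' => d * EGG a b a' b')]
        simp
    rw [Finset.sum_congr rfl fun b _ => inner2 b, Finset.sum_add_distrib,
      ← Finset.mul_sum, ← Finset.mul_sum, ← Finset.mul_sum,
      hfiber (fun t => EZZ (σ a) t (σ a') t)]
    show _ = ((1/(K₂:ℝ)) • (A * matExp μ (fun ω => Z ω * (Z ω)ᵀ) * Aᵀ)) a a'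
      + (((K₂:ℝ)/(q:ℝ)) • ((1/(q:ℝ)) • matExp μ (fun ω => Γ ω * (Γ ω)ᵀ))) a a'
    rw [Matrix.smul_apply, Matrix.smul_apply, Matrix.smul_apply, smul_eq_mul,
      smul_eq_mul, smul_eq_mul, hsig, hMG]
    generalize (∑ t : Fin K₂, EZZ (σ a) t (σ a') t) = S
    generalize (∑ b : Fin q, EGG a b a' b) = G
    rw [hd, hcval]
    field_simp
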